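/- Let L = d_T*(ℓ²(V)) + d_O*(ℓ²(V)). The orthogonal complement of L in ℓ²(A) is the orthogonal direct sum L^⊥ = (ker(d_O) ∩ H^(+)) ⊕ (ker(d_O) ∩ H^(−)); in particular the two subspaces ker(d_O) ∩ H^(+) and ker(d_O) ∩ H^(−) are mutually orthogonal and their sum is L^⊥. -/

import Mathlib

/- Setting: 𝕋 = (V,A) an infinite, locally finite tree. Vertices `V`, arcs = darts of a
simple graph `G`; `e.fst` = origin, `e.snd` = terminus, `e.symm` = reversed arc.
ℓ²(A) and ℓ²(V) are the `lp _ 2` spaces. The boundary operators, the shift and the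
Grover walk are characterized by their pointwise formulas. -/

noncomputable section
open scoped ComplexConjugate ComplexInnerProductSpace Classical
open Complex Filter Topology ContinuousLinearMap

namespace GroverStmt

/-- ℓ²(V) -/
abbrev lV (V : Type) : Type := lp (fun _ : V => ℂ) 2

variable {V : Type} (G : SimpleGraph V)

/-- ℓ²(A) where A is the set of symmetric arcs (darts) of `G`. -/
abbrev lA : Type := lp (fun _ : G.Dart => ℂ) 2

section deg
variable [∀ v : V, Fintype (G.neighborSet v)]

/-- `(d_T ψ)(u) = Σ_{e : t(e)=u} ψ(e)/√(deg u)` -/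
def IsBoundaryT (dT : lA G →L[ℂ] lV V) : Prop :=
  ∀ (ψ : lA G) (u : V),
    dT ψ u = ∑' e : {e : G.Dart // e.snd = u}, ψ e.1 / (Real.sqrt (G.degree u) : ℂ)

/-- `(d_O ψ)(u) = Σ_{e : o(e)=u} ψ(e)/√(deg u)` -/
def IsBoundaryO (dO : lA G →L[ℂ] lV V) : Prop :=
  ∀ (ψ : lA G) (u : V),
    dO ψ u = ∑' e : {e : G.Dart // e.fst = u}, ψ e.1 / (Real.sqrt (G.degree u) : ℂ)

end deg

/-- `(Sψ)(e) = ψ(ē)` -/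
def IsShift (S : lA G →L[ℂ] lA G) : Prop :=
  ∀ (ψ : lA G) (e : G.Dart), S ψ e = ψ e.symm

/-- the Grover walk `U = S (2 d_T* d_T − 1)` -/
def grover (S : lA G →L[ℂ] lA G) (dT : lA G →L[ℂ] lV V) : lA G →L[ℂ] lA G :=
  S ∘L ((2 : ℂ) • ((adjoint dT) ∘L dT) - 1)

variable (o : V)

/-- `v` is a descendant of `u` (w.r.t. the root `o`). -/
def desc (u v : V) : Prop := G.dist o v = G.dist o u + G.dist u v

/-- `e` is an arc pointing away from `u` inside the subtree of descendants of `u`. -/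
def awayIn (u : V) (e : G.Dart) : Prop :=
  desc G o u e.fst ∧ desc G o u e.snd ∧ G.dist u e.fst < G.dist u e.snd

section flows
variable [∀ v : V, Fintype (G.neighborSet v)]

/-- `m(u)`: the number of children of `u`. -/
def m (u : V) : ℕ := if u = o then G.degree u else G.degree u - 1

/-- `En u : Fin (m u) → Dart` is an enumeration `e_0^(u), …, e_{m(u)-1}^(u)` of the arcs
from `u` to its children. -/
def IsChildEnum (En : ∀ u : V, Fin (m G o u) → G.Dart) : Prop :=
  ∀ u : V,
    Function.Injective (En u) ∧
    (∀ k, (En u k).fst = u ∧ G.dist o (En u k).snd = G.dist o u + 1) ∧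
    (∀ e : G.Dart, e.fst = u → G.dist o e.snd = G.dist o u + 1 → ∃ k, En u k = e)

/-- the defining properties of the flow function `φ_{u,j}^(ε) : A → ℂ`. -/
def IsFlow (En : ∀ u : V, Fin (m G o u) → G.Dart)
    (u : V) (j : ℕ) (ε : ℂ) (φ : G.Dart → ℂ) : Prop :=
  (∀ k : Fin (m G o u),
      φ (En u k) =
        Complex.exp (2 * Real.pi * Complex.I * j / (m G o u)) ^ (k : ℕ) / (m G o u)) ∧
  (∀ e : G.Dart, awayIn G o u e → e.fst ≠ u →
     ∀ f : G.Dart, awayIn G o u f → f.snd = e.fst →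
       φ e = ε * φ f / (m G o e.fst)) ∧
  (∀ e : G.Dart, awayIn G o u e → φ e.symm = -ε * φ e) ∧
  (∀ e : G.Dart, ¬(desc G o u e.fst ∧ desc G o u e.snd) → φ e = 0)

end flows


/-- with `L = d_T*(ℓ²(V)) + d_O*(ℓ²(V))`, the subspaces
`ker(d_O) ∩ H^(+)` and `ker(d_O) ∩ H^(−)` are mutually orthogonal and
`L^⊥` is exactly their (orthogonal direct) sum. -/
def symmPerm : G.Dart ≃ G.Dart :=
  ⟨SimpleGraph.Dart.symm, SimpleGraph.Dart.symm, fun e => e.symm_symm, fun e => e.symm_symm⟩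

def fstEquiv (u : V) : {e : G.Dart // e.fst = u} ≃ G.neighborSet u where
  toFun e := ⟨e.1.snd, by have h := e.1.adj; rw [e.2] at h; exact h⟩
  invFun v := ⟨⟨(u, v.1), v.2⟩, rfl⟩
  left_inv e := by obtain ⟨⟨⟨a, b⟩, hadj⟩, (h : a = u)⟩ := e; subst h; rfl
  right_inv v := rfl

def sndEquiv (u : V) : {e : G.Dart // e.snd = u} ≃ {e : G.Dart // e.fst = u} where
  toFun e := ⟨e.1.symm, e.2⟩
  invFun e := ⟨e.1.symm, e.2⟩
  left_inv e := Subtype.ext e.1.symm_symm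
  right_inv e := Subtype.ext e.1.symm_symm

instance [∀ v : V, Fintype (G.neighborSet v)] (u : V) : Fintype {e : G.Dart // e.fst = u} :=
  Fintype.ofEquiv _ (fstEquiv G u).symm

instance [∀ v : V, Fintype (G.neighborSet v)] (u : V) : Fintype {e : G.Dart // e.snd = u} :=
  Fintype.ofEquiv _ (sndEquiv G u).symm

theorem statement5 {V : Type} (G : SimpleGraph V) [∀ v : V, Fintype (G.neighborSet v)]
    (hG : G.IsTree) [Infinite V]
    (dT dO : lA G →L[ℂ] lV V)
    (hdT : IsBoundaryT G dT) (hdO : IsBoundaryO G dO) :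
    (∀ ψ χ : lA G, dO ψ = 0 → (∀ e : G.Dart, ψ e.symm = ψ e) →
        dO χ = 0 → (∀ e : G.Dart, χ e.symm = -χ e) → ⟪ψ, χ⟫ = 0) ∧
    (∀ ψ : lA G,
      ψ ∈ (LinearMap.range (adjoint dT).toLinearMap ⊔ LinearMap.range (adjoint dO).toLinearMap)ᗮ ↔
      ∃ ψp ψm : lA G, dO ψp = 0 ∧ (∀ e : G.Dart, ψp e.symm = ψp e) ∧
        dO ψm = 0 ∧ (∀ e : G.Dart, ψm e.symm = -ψm e) ∧ ψ = ψp + ψm) := by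
  have key : ∀ (f : lA G) (u : V),
      dO f u = ∑ e : {e : G.Dart // e.fst = u}, f e.1 / (Real.sqrt (G.degree u) : ℂ) :=
    fun f u => by rw [hdO f u, tsum_fintype]
  have keyT : ∀ (f : lA G) (u : V),
      dT f u = ∑ e : {e : G.Dart // e.fst = u}, f e.1.symm / (Real.sqrt (G.degree u) : ℂ) :=
    fun f u => by
      rw [hdT f u, tsum_fintype, ← Equiv.sum_comp (sndEquiv G u).symm
        (fun e : {e : G.Dart // e.snd = u} => f e.1 / (Real.sqrt (G.degree u) : ℂ))]
      rfl
  constructor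
  · intro ψ χ _ hψ _ hχ
    have h1 : ⟪ψ, χ⟫ = ∑' e, ⟪ψ e, χ e⟫ := lp.inner_eq_tsum ψ χ
    have h2 : ∑' e, ⟪ψ e, χ e⟫ = ∑' e, ⟪ψ ((symmPerm G) e), χ ((symmPerm G) e)⟫ :=
      ((symmPerm G).tsum_eq fun e => ⟪ψ e, χ e⟫).symm
    have h3 : ∀ e : G.Dart, ⟪ψ ((symmPerm G) e), χ ((symmPerm G) e)⟫ = -⟪ψ e, χ e⟫ := by
      intro e
      show ⟪ψ e.symm, χ e.symm⟫ = _
      rw [hψ e, hχ e, inner_neg_right]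
    have h4 : ∑' e, ⟪ψ e, χ e⟫ = - ∑' e, ⟪ψ e, χ e⟫ := by
      nth_rewrite 1 [h2]
      rw [tsum_congr h3, tsum_neg]
    rw [h1]
    linear_combination h4 / 2
  · intro ψ
    constructor
    · intro hψ
      have hT : dT ψ = 0 := by
        have h := (Submodule.mem_orthogonal _ _).1 hψ (adjoint dT (dT ψ))
          (Submodule.mem_sup_left ⟨dT ψ, rfl⟩)
        rw [ContinuousLinearMap.adjoint_inner_left] at h
        exact inner_self_eq_zero.1 h
      have hO : dO ψ = 0 := by
        have h := (Submodule.mem_orthogonal _ _).1 hψ (adjoint dO (dO ψ))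
          (Submodule.mem_sup_right ⟨dO ψ, rfl⟩)
        rw [ContinuousLinearMap.adjoint_inner_left] at h
        exact inner_self_eq_zero.1 h
      have hmem : Memℓp (fun e : G.Dart => ψ e.symm) 2 := by
        have hm := lp.memℓp ψ
        rw [memℓp_gen_iff (by norm_num)] at hm ⊢
        exact ((symmPerm G).summable_iff
          (f := fun e : G.Dart => ‖ψ e‖ ^ (2 : ENNReal).toReal)).2 hm
      obtain ⟨Sψ, hS⟩ : ∃ S : lA G, ∀ e : G.Dart, S e = ψ e.symm :=
        ⟨⟨fun e => ψ e.symm, hmem⟩, fun e => rfl⟩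
      refine ⟨(2⁻¹ : ℂ) • (ψ + Sψ), (2⁻¹ : ℂ) • (ψ - Sψ), ?_, ?_, ?_, ?_, ?_⟩
      · apply lp.ext; funext u
        rw [key, lp.coeFn_zero, Pi.zero_apply]
        have : ∀ e : {e : G.Dart // e.fst = u},
            ((2⁻¹ : ℂ) • (ψ + Sψ)) e.1 / (Real.sqrt (G.degree u) : ℂ) =
            2⁻¹ * (ψ e.1 / (Real.sqrt (G.degree u) : ℂ)
                 + ψ e.1.symm / (Real.sqrt (G.degree u) : ℂ)) := by
          intro e
          rw [lp.coeFn_smul, Pi.smul_apply, lp.coeFn_add, Pi.add_apply, hS, smul_eq_mul]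
          ring
        rw [Finset.sum_congr rfl (fun e _ => this e), ← Finset.mul_sum,
          Finset.sum_add_distrib, ← key, ← keyT, hT, hO, lp.coeFn_zero]
        simp
      · intro e
        rw [lp.coeFn_smul, Pi.smul_apply, Pi.smul_apply, lp.coeFn_add, Pi.add_apply,
          Pi.add_apply, hS, hS, e.symm_symm, smul_eq_mul, smul_eq_mul]
        ring
      · apply lp.ext; funext u
        rw [key, lp.coeFn_zero, Pi.zero_apply]
        have : ∀ e : {e : G.Dart // e.fst = u},
            ((2⁻¹ : ℂ) • (ψ - Sψ)) e.1 / (Real.sqrt (G.degree u) : ℂ) =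
            2⁻¹ * (ψ e.1 / (Real.sqrt (G.degree u) : ℂ)
                 - ψ e.1.symm / (Real.sqrt (G.degree u) : ℂ)) := by
          intro e
          rw [lp.coeFn_smul, Pi.smul_apply, lp.coeFn_sub, Pi.sub_apply, hS, smul_eq_mul]
          ring
        rw [Finset.sum_congr rfl (fun e _ => this e), ← Finset.mul_sum,
          Finset.sum_sub_distrib, ← key, ← keyT, hT, hO, lp.coeFn_zero]
        simp
      · intro e
        rw [lp.coeFn_smul, Pi.smul_apply, Pi.smul_apply, lp.coeFn_sub, Pi.sub_apply,
          Pi.sub_apply, hS, hS, e.symm_symm, smul_eq_mul, smul_eq_mul]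
        ring
      · apply lp.ext; funext e
        rw [lp.coeFn_add, Pi.add_apply, lp.coeFn_smul, lp.coeFn_smul, Pi.smul_apply,
          Pi.smul_apply, lp.coeFn_add, lp.coeFn_sub, Pi.add_apply, Pi.sub_apply, hS,
          smul_eq_mul, smul_eq_mul]
        ring
    · rintro ⟨ψp, ψm, hOp, hsp, hOm, hsm, rfl⟩
      rw [Submodule.mem_orthogonal]
      intro x hx
      rcases Submodule.mem_sup.1 hx with ⟨a, ⟨f, rfl⟩, b, ⟨g, rfl⟩, rfl⟩
      have hO : dO (ψp + ψm) = 0 := by rw [map_add, hOp, hOm, add_zero]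
      have hT : dT (ψp + ψm) = 0 := by
        apply lp.ext; funext u
        rw [keyT, lp.coeFn_zero, Pi.zero_apply]
        have : ∀ e : {e : G.Dart // e.fst = u},
            (ψp + ψm) e.1.symm / (Real.sqrt (G.degree u) : ℂ) =
            ψp e.1 / (Real.sqrt (G.degree u) : ℂ) - ψm e.1 / (Real.sqrt (G.degree u) : ℂ) := by
          intro e
          rw [lp.coeFn_add, Pi.add_apply, hsp, hsm]
          ring
        rw [Finset.sum_congr rfl (fun e _ => this e), Finset.sum_sub_distrib,
          ← key, ← key, hOp, hOm, lp.coeFn_zero]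
        simp
      rw [inner_add_left, ContinuousLinearMap.coe_coe, ContinuousLinearMap.coe_coe,
        ContinuousLinearMap.adjoint_inner_left,
        ContinuousLinearMap.adjoint_inner_left, hT, hO, inner_zero_right, inner_zero_right,
        add_zero]


end GroverStmt
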